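/- Let A be a unital Banach algebra and X a unit-linked Banach A-bimodule. Let p < 1 and θ ≥ 0. Suppose f : A → X satisfies f(0) = 0 and g : A → X satisfies g(0) = g(1) = 0, such that ‖f(a + λb + c²) − f(a) − λf(b) − c·f(c) − g(c)·c‖ ≤ θ‖f(c)‖ and ‖g(λab + λc) − λa·g(b) − λ·g(a)·b − λg(c)‖ ≤ θ(‖a‖^p + ‖b‖^p + ‖c‖^p) for all a, b, c ∈ A and all λ ∈ ℂ with |λ| = 1. Then f is ℂ-linear. -/

import Mathlib

open Filter Topology MulOpposite


lemma unimod_decomp (μ : ℂ) (h : ‖μ‖ ≤ 2) :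
    ∃ l1 l2 : ℂ, ‖l1‖ = 1 ∧ ‖l2‖ = 1 ∧ l1 + l2 = μ := by
  rcases eq_or_ne μ 0 with rfl | hμ
  · exact ⟨1, -1, by simp, by simp, by simp⟩
  · set r : ℝ := ‖μ‖ with hr
    have hr0 : 0 < r := norm_pos_iff.mpr hμ
    set u : ℂ := μ / r with hu
    have hnu : ‖u‖ = 1 := by
      rw [hu, norm_div, Complex.norm_real, Real.norm_eq_abs, abs_of_pos hr0]
      exact div_self hr0.ne'
    set s : ℝ := Real.sqrt (1 - (r/2)^2) with hs
    have hs2 : s ^ 2 = 1 - (r/2)^2 := by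
      rw [hs, Real.sq_sqrt]
      nlinarith
    refine ⟨u * ((r/2 : ℝ) + s * Complex.I), u * ((r/2 : ℝ) - s * Complex.I), ?_, ?_, ?_⟩
    · have : ‖((r/2 : ℝ) + (s:ℂ) * Complex.I)‖ = 1 := by
        have := Complex.normSq_add_mul_I (r/2) s
        have h2 : ‖((r/2 : ℝ) + (s:ℂ) * Complex.I)‖ ^ 2 = (r/2)^2 + s^2 := by
          rw [Complex.sq_norm, this]
        nlinarith [norm_nonneg ((r/2 : ℝ) + (s:ℂ) * Complex.I)]
      rw [norm_mul, hnu, this, one_mul]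
    · have : ‖((r/2 : ℝ) - (s:ℂ) * Complex.I)‖ = 1 := by
        have h0 := Complex.normSq_add_mul_I (r/2) (-s)
        have h2 : ‖((r/2 : ℝ) - (s:ℂ) * Complex.I)‖ ^ 2 = (r/2)^2 + s^2 := by
          have : ((r/2 : ℝ) - (s:ℂ) * Complex.I) = ((r/2 : ℝ) + ((-s : ℝ):ℂ) * Complex.I) := by
            push_cast; ring
          rw [this, Complex.sq_norm, h0]; ring
        nlinarith [norm_nonneg ((r/2 : ℝ) - (s:ℂ) * Complex.I)]
      rw [norm_mul, hnu, this, one_mul]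
    · have hrc : (r : ℂ) ≠ 0 := by exact_mod_cast hr0.ne'
      field_simp [hu]
      rw [hu]; push_cast; field_simp
      ring


set_option linter.unusedSectionVars false
set_option linter.unusedVariables false

section

variable {A X : Type*}
  [NormedRing A] [NormedAlgebra ℂ A] [CompleteSpace A]
  [NormedAddCommGroup X] [NormedSpace ℂ X] [CompleteSpace X]
  [Module A X] [Module Aᵐᵒᵖ X]
  [IsBoundedSMul A X] [IsBoundedSMul Aᵐᵒᵖ X]
  [SMulCommClass A Aᵐᵒᵖ X]
  [IsScalarTower ℂ A X] [IsScalarTower ℂ Aᵐᵒᵖ X]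

/-- A Jordan derivation from `A` into the bimodule `X`: a `ℂ`-linear map `δ` with
`δ(a²) = a·δ(a) + δ(a)·a`. -/
def IsJordanDeriv (δ : A → X) : Prop :=
  (∀ x y : A, δ (x + y) = δ x + δ y) ∧ (∀ (μ : ℂ) (x : A), δ (μ • x) = μ • δ x) ∧
    ∀ a : A, δ (a ^ 2) = a • δ a + op a • δ a

/-- A generalized Jordan derivation: a `ℂ`-linear map `d` such that there is a Jordan
derivation `δ` with `d(a²) = a·d(a) + δ(a)·a`. -/
def IsGenJordanDeriv (d : A → X) : Prop :=
  (∀ x y : A, d (x + y) = d x + d y) ∧ (∀ (μ : ℂ) (x : A), d (μ • x) = μ • d x) ∧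
    ∃ δ : A → X, IsJordanDeriv δ ∧ ∀ a : A, d (a ^ 2) = a • d a + op a • δ a

theorem stmt (f g : A → X) (θ p : ℝ) (hθ : 0 ≤ θ) (hp : p < 1)
    (hf0 : f 0 = 0) (hg0 : g 0 = 0) (hg1 : g 1 = 0)
    (h1 : ∀ (a b c : A) (μ : ℂ), ‖μ‖ = 1 →
      ‖f (a + μ • b + c ^ 2) - f a - μ • f b - c • f c - op c • g c‖ ≤ θ * ‖f c‖)
    (h2 : ∀ (a b c : A) (μ : ℂ), ‖μ‖ = 1 →
      ‖g (μ • (a * b) + μ • c) - μ • a • g b - μ • op b • g a - μ • g c‖ ≤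
        θ * (‖a‖ ^ p + ‖b‖ ^ p + ‖c‖ ^ p)) :
    (∀ a b : A, f (a + b) = f a + f b) ∧ ∀ (μ : ℂ) (a : A), f (μ • a) = μ • f a := by
  have key : ∀ (a b : A) (μ : ℂ), ‖μ‖ = 1 → f (a + μ • b) = f a + μ • f b := by
    intro a b μ hμ
    have h := h1 a b 0 μ hμ
    simp only [hf0, hg0, smul_zero, sub_zero, norm_zero, mul_zero, zero_pow,
      add_zero, ne_eq, OfNat.ofNat_ne_zero, not_false_eq_true] at h
    have := norm_le_zero_iff.mp h
    have h3 : f (a + μ • b) - f a - μ • f b = 0 := this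
    rw [sub_eq_zero] at h3
    linear_combination (norm := abel) h3
  have hadd : ∀ a b : A, f (a + b) = f a + f b := by
    intro a b
    have := key a b 1 (by simp)
    simpa using this
  have hunit : ∀ (μ : ℂ) (a : A), ‖μ‖ = 1 → f (μ • a) = μ • f a := by
    intro μ a hμ
    have := key 0 a μ hμ
    simpa [hf0] using this
  have hsmall : ∀ (μ : ℂ) (a : A), ‖μ‖ ≤ 2 → f (μ • a) = μ • f a := by
    intro μ a hμ
    obtain ⟨l1, l2, h1', h2', h3'⟩ := unimod_decomp μ hμ
    have : μ • a = l1 • a + l2 • a := by rw [← add_smul, h3']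
    rw [this, hadd, hunit l1 a h1', hunit l2 a h2', ← add_smul, h3']
  have hnsmul : ∀ (n : ℕ) (x : X → X), True := fun _ _ => trivial
  have hnat : ∀ (n : ℕ) (x : A), f (n • x) = n • f x := by
    intro n
    induction n with
    | zero => intro x; simp [hf0]
    | succ k ih => intro x; rw [succ_nsmul, hadd, ih, succ_nsmul]
  refine ⟨hadd, fun μ a => ?_⟩
  obtain ⟨n, hn⟩ := exists_nat_ge (‖μ‖ / 2)
  have hne : ((n:ℂ) + 1) ≠ 0 := Nat.cast_add_one_ne_zero n
  have hnorm : ‖((n:ℂ)+1)‖ = (n:ℝ)+1 := by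
    rw [show ((n:ℂ)+1) = ((n+1 : ℕ) : ℂ) by push_cast; ring, Complex.norm_natCast]
    push_cast; ring
  have hdiv : ‖μ / ((n:ℂ)+1)‖ ≤ 2 := by
    rw [norm_div]
    rw [div_le_iff₀ (norm_pos_iff.mpr hne)]
    rw [hnorm]
    nlinarith [norm_nonneg μ]
  have hμeq : μ • a = (n+1) • ((μ / ((n:ℂ)+1)) • a) := by
    rw [← Nat.cast_smul_eq_nsmul ℂ, smul_smul]
    congr 1
    push_cast
    field_simp
  rw [hμeq, hnat, hsmall _ _ hdiv, ← Nat.cast_smul_eq_nsmul ℂ, smul_smul]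
  congr 1
  push_cast
  field_simp

end
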